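/- Every 8-dimensional 2-step nilpotent symplectic Lie algebra over K (K = ℝ or ℂ) with characteristic sequence (2,2,1,1,1,1) and with 6 generators (i.e. dim(g/[g,g]) = 6) is decomposable, i.e. is the direct sum of two nonzero ideals. -/

import Mathlib

/-- A symplectic form on a Lie algebra `g` over `K`: a `K`-bilinear form which is
alternating, nondegenerate and closed, i.e.
`θ ⁅X,Y⁆ Z + θ ⁅Y,Z⁆ X + θ ⁅Z,X⁆ Y = 0` for all `X Y Z`. -/
def IsSymplecticForm (K : Type*) [RCLike K] (g : Type*) [LieRing g] [LieAlgebra K g]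
    (θ : g → g → K) : Prop :=
  (∀ (a : K) (X Y Z : g), θ (a • X + Y) Z = a * θ X Z + θ Y Z) ∧
  (∀ (a : K) (X Y Z : g), θ X (a • Y + Z) = a * θ X Y + θ X Z) ∧
  (∀ X : g, θ X X = 0) ∧
  (∀ X : g, (∀ Y : g, θ X Y = 0) → X = 0) ∧
  (∀ X Y Z : g, θ ⁅X, Y⁆ Z + θ ⁅Y, Z⁆ X + θ ⁅Z, X⁆ Y = 0)
/-- A Lie algebra is 2-step nilpotent if `[[g,g],g] = 0` and `[g,g] ≠ 0`. -/
def IsTwoStepNilpotent (g : Type*) [LieRing g] : Prop :=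
  (∀ X Y Z : g, ⁅⁅X, Y⁆, Z⁆ = 0) ∧ ∃ X Y : g, ⁅X, Y⁆ ≠ 0
/-- A 2-step nilpotent Lie algebra has characteristic sequence `(2,…,2,1,…,1)` with exactly
`k` twos iff the maximum of `rank (ad X) = dim ⁅X, g⁆` over `X ∈ g \ [g,g]` equals `k`. -/
def HasCharSeqTwos (K : Type*) [RCLike K] (g : Type*) [LieRing g] [LieAlgebra K g]
    (k : ℕ) : Prop :=
  (∀ X : g, X ∉ LieAlgebra.derivedSeries K g 1 →
      Module.finrank K ↥(LinearMap.range (LieAlgebra.ad K g X)) ≤ k) ∧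
  ∃ X : g, X ∉ LieAlgebra.derivedSeries K g 1 ∧
      Module.finrank K ↥(LinearMap.range (LieAlgebra.ad K g X)) = k

/-- Every 8-dimensional 2-step nilpotent symplectic Lie algebra over `K` with characteristic
sequence `(2,2,1,1,1,1)` and with 6 generators (i.e. `dim (g/[g,g]) = 6`) is decomposable:
it is the direct sum of two nonzero ideals. -/
theorem decomposable_of_eightDim_charSeq24_sixGen_symplectic
    (K : Type*) [RCLike K] (g : Type*) [LieRing g] [LieAlgebra K g] [FiniteDimensional K g]
    (h2 : IsTwoStepNilpotent g) (h8 : Module.finrank K g = 8)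
    (hc : HasCharSeqTwos K g 2)
    (hgen : Module.finrank K (g ⧸ (LieAlgebra.derivedSeries K g 1 : Submodule K g)) = 6)
    (θ : g → g → K) (hθ : IsSymplecticForm K g θ) :
    ∃ I J : LieIdeal K g, I ≠ ⊥ ∧ J ≠ ⊥ ∧ I ⊓ J = ⊥ ∧ I ⊔ J = ⊤ := by
  classical
  obtain ⟨hL, hR, halt, hnd, hcl⟩ := hθ
  -- basic bilinearity facts
  have addL : ∀ X Y Z : g, θ (X + Y) Z = θ X Z + θ Y Z := by
    intro X Y Z; have h := hL 1 X Y Z; simpa using h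
  have zeroL : ∀ Z : g, θ 0 Z = 0 := by
    intro Z; have h := addL 0 0 Z; rw [add_zero] at h; linear_combination -h
  have smulL : ∀ (a : K) (X Z : g), θ (a • X) Z = a * θ X Z := by
    intro a X Z; have h := hL a X 0 Z; rw [add_zero] at h; rw [h, zeroL, add_zero]
  have addR : ∀ X Y Z : g, θ X (Y + Z) = θ X Y + θ X Z := by
    intro X Y Z; have h := hR 1 X Y Z; simpa using h
  have zeroR : ∀ X : g, θ X 0 = 0 := by
    intro X; have h := addR X 0 0; rw [add_zero] at h; linear_combination -h
  have smulR : ∀ (a : K) (X Z : g), θ X (a • Z) = a * θ X Z := by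
    intro a X Z; have h := hR a X Z 0; rw [add_zero] at h; rw [h, zeroR, add_zero]
  have negL : ∀ X Z : g, θ (-X) Z = - θ X Z := by
    intro X Z; have h := smulL (-1) X Z; simpa using h
  have negR : ∀ X Z : g, θ X (-Z) = - θ X Z := by
    intro X Z; have h := smulR (-1) X Z; simpa using h
  have subL : ∀ X Y Z : g, θ (X - Y) Z = θ X Z - θ Y Z := by
    intro X Y Z; rw [sub_eq_add_neg, addL, negL]; ring
  have subR : ∀ X Y Z : g, θ X (Y - Z) = θ X Y - θ X Z := by
    intro X Y Z; rw [sub_eq_add_neg, addR, negR]; ring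
  have skew : ∀ X Y : g, θ X Y = - θ Y X := by
    intro X Y
    have h := halt (X + Y)
    rw [addL, addR, addR, halt X, halt Y] at h
    linear_combination h
  -- the derived subalgebra
  set C : Submodule K g := (LieAlgebra.derivedSeries K g 1 : Submodule K g) with hCdef
  have hC2 : Module.finrank K C = 2 := by
    have h := Submodule.finrank_quotient_add_finrank C
    rw [hgen, h8] at h
    omega
  have hbr : ∀ X Y : g, ⁅X, Y⁆ ∈ C := by
    intro X Y
    have : ⁅X, Y⁆ ∈ LieAlgebra.derivedSeries K g 1 := by
      rw [LieAlgebra.derivedSeries_def, LieAlgebra.derivedSeriesOfIdeal_succ,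
        LieAlgebra.derivedSeriesOfIdeal_zero]
      exact LieSubmodule.lie_mem_lie (LieSubmodule.mem_top X) (LieSubmodule.mem_top Y)
    exact this
  -- a basis of C
  obtain ⟨bC⟩ : Nonempty (Module.Basis (Fin 2) K C) := ⟨Module.finBasisOfFinrankEq K C hC2⟩
  set e7 : g := (bC 0 : g) with he7def
  set e8 : g := (bC 1 : g) with he8def
  have he7C : e7 ∈ C := (bC 0).2
  have hspan : ∀ c ∈ C, ∃ a b : K, c = a • e7 + b • e8 := by
    intro c hc
    refine ⟨bC.repr ⟨c, hc⟩ 0, bC.repr ⟨c, hc⟩ 1, ?_⟩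
    have h := bC.sum_repr ⟨c, hc⟩
    rw [Fin.sum_univ_two] at h
    have h2 := congrArg (Subtype.val) h
    simpa using h2.symm
  have hind : ∀ a b : K, a • e7 + b • e8 = 0 → a = 0 ∧ b = 0 := by
    intro a b hab
    have h0 : a • (bC 0) + b • (bC 1) = 0 := by
      apply Subtype.ext
      simpa using hab
    have h1 := congrArg (fun x => bC.repr x 0) h0
    have h2 := congrArg (fun x => bC.repr x 1) h0
    simp [Module.Basis.repr_self] at h1 h2
    exact ⟨h1, h2⟩
  have he7ne : e7 ≠ 0 := by
    intro h
    exact one_ne_zero (hind 1 0 (by simp [h])).1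
  -- θ against C
  have hθC : ∀ u : g, θ u e7 = 0 → θ u e8 = 0 → ∀ c ∈ C, θ u c = 0 := by
    intro u h7 h8' c hc
    obtain ⟨a, b, rfl⟩ := hspan c hc
    rw [addR, smulR, smulR, h7, h8']; ring
  have hndR : ∀ Y : g, (∀ X : g, θ X Y = 0) → Y = 0 := by
    intro Y h
    apply hnd
    intro X
    rw [skew, h X, neg_zero]
  have hex : ∀ c : g, c ≠ 0 → ∃ Y, θ Y c ≠ 0 := by
    intro c hc
    by_contra h
    push_neg at h
    exact hc (hndR c h)
  -- construct E5 E6 dual to e7 e8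
  obtain ⟨Y1, ht1⟩ := hex e7 he7ne
  set cc : K := θ Y1 e8 / θ Y1 e7 with hcc
  have hY1e8 : θ Y1 e8 = cc * θ Y1 e7 := by
    rw [hcc]; field_simp
  have he8'ne : e8 - cc • e7 ≠ 0 := by
    intro h
    have h' : (-cc) • e7 + (1 : K) • e8 = 0 := by
      rw [← h]; module
    exact one_ne_zero (hind (-cc) 1 h').2
  obtain ⟨Y2, hY2⟩ := hex (e8 - cc • e7) he8'ne
  rw [subR, smulR] at hY2
  -- hY2 : θ Y2 e8 - cc * θ Y2 e7 ≠ 0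
  obtain ⟨E6, hE67, hE68⟩ : ∃ E6 : g, θ E6 e7 = 0 ∧ θ E6 e8 = 1 := by
    refine ⟨(θ Y2 e8 - cc * θ Y2 e7)⁻¹ • (Y2 - (θ Y2 e7 / θ Y1 e7) • Y1), ?_, ?_⟩
    · rw [smulL, subL, smulL]
      field_simp; ring
    · rw [smulL, subL, smulL, hY1e8]
      have hinner : θ Y2 e8 - θ Y2 e7 / θ Y1 e7 * (cc * θ Y1 e7) = θ Y2 e8 - cc * θ Y2 e7 := by
        field_simp
      rw [hinner, inv_mul_cancel₀ hY2]
  obtain ⟨E5, hE57, hE58⟩ : ∃ E5 : g, θ E5 e7 = 1 ∧ θ E5 e8 = 0 := by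
    refine ⟨(θ Y1 e7)⁻¹ • Y1 - cc • E6, ?_, ?_⟩
    · rw [subL, smulL, smulL, hE67]
      field_simp; ring
    · rw [subL, smulL, smulL, hE68, hY1e8]
      field_simp; ring
  -- decomposition of arbitrary vectors
  have hdec7 : ∀ X : g, θ (X - θ X e7 • E5 - θ X e8 • E6) e7 = 0 := by
    intro X
    rw [subL, subL, smulL, smulL, hE57, hE67]; ring
  have hdec8 : ∀ X : g, θ (X - θ X e7 • E5 - θ X e8 • E6) e8 = 0 := by
    intro X
    rw [subL, subL, smulL, smulL, hE58, hE68]; ring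
  -- linear maps
  have hmk : ∀ Z : g, ∃ f : g →ₗ[K] K, ∀ X, f X = θ X Z := fun Z =>
    ⟨{ toFun := fun X => θ X Z
       map_add' := fun X Y => addL X Y Z
       map_smul' := fun a X => by simpa using smulL a X Z }, fun _ => rfl⟩
  have hmk2 : ∀ A B : g, ∃ f : g →ₗ[K] K, ∀ u, f u = θ ⁅u, A⁆ B := fun A B =>
    ⟨{ toFun := fun u => θ ⁅u, A⁆ B
       map_add' := fun u v => by
         show θ ⁅u + v, A⁆ B = θ ⁅u, A⁆ B + θ ⁅v, A⁆ B
         rw [add_lie]; exact addL _ _ _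
       map_smul' := fun a u => by
         show θ ⁅a • u, A⁆ B = (RingHom.id K) a • θ ⁅u, A⁆ B
         rw [smul_lie]; simpa using smulL a _ B }, fun _ => rfl⟩
  obtain ⟨f7, hf7⟩ := hmk e7
  obtain ⟨f8, hf8⟩ := hmk e8
  obtain ⟨p1, hp1⟩ := hmk2 E5 E5
  obtain ⟨p2, hp2⟩ := hmk2 E5 E6
  obtain ⟨p3, hp3⟩ := hmk2 E6 E6
  set Ψ : g →ₗ[K] (K × K) × K × K × K := (f7.prod f8).prod (p1.prod (p2.prod p3)) with hΨdef
  have hker : 3 ≤ Module.finrank K (LinearMap.ker Ψ) := by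
    have h := LinearMap.finrank_range_add_finrank_ker Ψ
    rw [h8] at h
    have hr : Module.finrank K (LinearMap.range Ψ) ≤ 5 := by
      have h2 := Submodule.finrank_le (LinearMap.range Ψ)
      simpa [Module.finrank_prod] using h2
    omega
  have hEx : ∃ u, u ∈ LinearMap.ker Ψ ∧ u ∉ C := by
    by_contra h
    push_neg at h
    have hle : (LinearMap.ker Ψ : Submodule K g) ≤ C := fun x hx => h x hx
    have := Submodule.finrank_mono hle
    omega
  obtain ⟨u, huK, huC⟩ := hEx
  rw [LinearMap.mem_ker] at huK
  have huK' : (f7 u = 0 ∧ f8 u = 0) ∧ p1 u = 0 ∧ p2 u = 0 ∧ p3 u = 0 := by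
    rw [hΨdef] at huK
    simpa [LinearMap.prod_apply, Prod.ext_iff] using huK
  obtain ⟨⟨hu7, hu8⟩, hup1, hup2, hup3⟩ := huK'
  rw [hf7] at hu7
  rw [hf8] at hu8
  rw [hp1] at hup1
  rw [hp2] at hup2
  rw [hp3] at hup3
  have huC' : ∀ c ∈ C, θ u c = 0 := hθC u hu7 hu8
  -- symmetry of (X,Y) ↦ θ ⁅u,X⁆ Y
  have hsym : ∀ X Y : g, θ ⁅u, X⁆ Y = θ ⁅u, Y⁆ X := by
    intro X Y
    have h := hcl u X Y
    have h2 : θ ⁅X, Y⁆ u = 0 := by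
      rw [skew, huC' _ (hbr X Y), neg_zero]
    have h3 : θ ⁅Y, u⁆ X = - θ ⁅u, Y⁆ X := by
      rw [← lie_skew u Y, negL, neg_neg]
    linear_combination h - h2 - h3
  have hvan : ∀ X w : g, θ w e7 = 0 → θ w e8 = 0 → θ ⁅u, X⁆ w = 0 := by
    intro X w h7 h8'
    rw [skew, hθC w h7 h8' _ (hbr u X), neg_zero]
  -- u is central
  have hcen : ∀ X : g, ⁅u, X⁆ = 0 := by
    intro X
    apply hnd
    intro Y
    have hbrx : ⁅u, X⁆ = ⁅u, X - θ X e7 • E5 - θ X e8 • E6⁆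
        + θ X e7 • ⁅u, E5⁆ + θ X e8 • ⁅u, E6⁆ := by
      rw [lie_sub, lie_sub, lie_smul, lie_smul]; abel
    have T1 : θ ⁅u, X - θ X e7 • E5 - θ X e8 • E6⁆ Y = 0 := by
      rw [hsym]; exact hvan Y _ (hdec7 X) (hdec8 X)
    have hbry : ⁅u, Y⁆ = ⁅u, Y - θ Y e7 • E5 - θ Y e8 • E6⁆
        + θ Y e7 • ⁅u, E5⁆ + θ Y e8 • ⁅u, E6⁆ := by
      rw [lie_sub, lie_sub, lie_smul, lie_smul]; abel
    have T2 : θ ⁅u, E5⁆ Y = 0 := by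
      rw [hsym E5 Y, hbry, addL, addL, smulL, smulL]
      rw [hsym _ E5, hvan E5 _ (hdec7 Y) (hdec8 Y), hup1, hsym E6 E5, hup2]
      ring
    have T3 : θ ⁅u, E6⁆ Y = 0 := by
      rw [hsym E6 Y, hbry, addL, addL, smulL, smulL]
      rw [hsym _ E6, hvan E6 _ (hdec7 Y) (hdec8 Y), hup2, hup3]
      ring
    rw [hbrx, addL, addL, smulL, smulL, T1, T2, T3]
    ring
  have hune : u ≠ 0 := fun h => huC (h ▸ C.zero_mem)
  -- dual functional killing C with φ u = 1
  have huQ : (C.mkQ u : g ⧸ C) ≠ 0 := by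
    intro h
    rw [Submodule.mkQ_apply, Submodule.Quotient.mk_eq_zero] at h
    exact huC h
  obtain ⟨ψ0, hψ0⟩ : ∃ ψ : Module.Dual K (g ⧸ C), ψ (C.mkQ u) ≠ 0 := by
    by_contra h
    push_neg at h
    exact huQ ((Module.forall_dual_apply_eq_zero_iff K _).mp h)
  set φ : g →ₗ[K] K := (ψ0 (C.mkQ u))⁻¹ • (ψ0.comp C.mkQ) with hφdef
  have hφu : φ u = 1 := by
    rw [hφdef]
    simp only [LinearMap.smul_apply, LinearMap.comp_apply, smul_eq_mul]
    exact inv_mul_cancel₀ hψ0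
  have hφC : ∀ c ∈ C, φ c = 0 := by
    intro c hc
    rw [hφdef]
    simp only [LinearMap.smul_apply, LinearMap.comp_apply, smul_eq_mul,
      Submodule.mkQ_apply]
    rw [(Submodule.Quotient.mk_eq_zero C).mpr hc, map_zero, mul_zero]
  -- the two ideals
  refine ⟨{ toSubmodule := Submodule.span K {u}, lie_mem := ?_ },
          { toSubmodule := LinearMap.ker φ, lie_mem := ?_ }, ?_, ?_, ?_, ?_⟩
  · intro x m hm
    obtain ⟨t, rfl⟩ := Submodule.mem_span_singleton.mp hm
    have : ⁅x, t • u⁆ = (0 : g) := by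
      rw [lie_smul, ← lie_skew, hcen, neg_zero, smul_zero]
    show ⁅x, t • u⁆ ∈ Submodule.span K {u}
    rw [this]
    exact Submodule.zero_mem _
  · intro x m _
    show ⁅x, m⁆ ∈ LinearMap.ker φ
    rw [LinearMap.mem_ker]
    exact hφC _ (hbr x m)
  · intro hbot
    rw [LieSubmodule.eq_bot_iff] at hbot
    exact hune (hbot u (Submodule.mem_span_singleton_self u))
  · intro hbot
    rw [LieSubmodule.eq_bot_iff] at hbot
    exact he7ne (hbot e7 (LinearMap.mem_ker.mpr (hφC _ he7C)))
  · rw [LieSubmodule.eq_bot_iff]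
    intro m hm
    rw [LieSubmodule.mem_inf] at hm
    obtain ⟨hmI, hmJ⟩ := hm
    obtain ⟨t, rfl⟩ := Submodule.mem_span_singleton.mp hmI
    have : φ (t • u) = t := by rw [map_smul, hφu, smul_eq_mul, mul_one]
    have ht : t = 0 := by
      rw [← this]
      exact hmJ
    rw [ht, zero_smul]
  · rw [eq_top_iff]
    intro x _
    rw [LieSubmodule.mem_sup]
    refine ⟨φ x • u, Submodule.smul_mem _ _ (Submodule.mem_span_singleton_self u),
      x - φ x • u, ?_, by abel⟩
    show x - φ x • u ∈ LinearMap.ker φ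
    rw [LinearMap.mem_ker, map_sub, map_smul, hφu, smul_eq_mul, mul_one, sub_self]
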